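/- Let X = S² × S¹ with the involution ρ((a,b,c),u) = ((a,b,c), ū), let f : X → X be f((a,b,c),u) = ((−a,−b,−c),u), and let A = {(a,b,0) ∈ S²} × {i,−i}. There exists a continuous map H : X × [0,1] → X such that H(ρ(x),t) = ρ(H(x,t)) for all x ∈ X and t ∈ [0,1], H(x,0) = f(x) for all x ∈ X, and {x ∈ X : H(x,1) = x} = A. That is, A can be realized as the fixed point set of a map ℤ₂-homotopic (not necessarily fiberwise) to f. -/

import Mathlib

/-- The unit 2-sphere in `ℝ³`. -/
def Sph2 : Set (ℝ × ℝ × ℝ) := {v | v.1 ^ 2 + v.2.1 ^ 2 + v.2.2 ^ 2 = 1}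

/-- The antipodal map `v ↦ -v` on the 2-sphere. -/
def antipS2 (v : Sph2) : Sph2 :=
  ⟨(-(v : ℝ × ℝ × ℝ).1, -(v : ℝ × ℝ × ℝ).2.1, -(v : ℝ × ℝ × ℝ).2.2), by
    have h := v.2
    simp only [Sph2, Set.mem_setOf_eq] at h ⊢
    nlinarith [h]⟩

/-- The unit circle in `ℂ`. -/
def SphC : Set ℂ := {z | ‖z‖ = 1}

/-- Complex conjugation on the unit circle. -/
def conjC (u : SphC) : SphC :=
  ⟨(starRingEnd ℂ) (u : ℂ), by
    have h := u.2
    simp only [SphC, Set.mem_setOf_eq] at h ⊢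
    simpa using h⟩

/-- The total space `X = S² × S¹`. -/
def XS2S1 : Type := Sph2 × SphC

noncomputable instance : TopologicalSpace XS2S1 := by unfold XS2S1; infer_instance

/-- The involution `ρ((a,b,c),u) = ((a,b,c), ū)` on `X = S² × S¹`. -/
def rhoX (x : XS2S1) : XS2S1 := (x.1, conjC x.2)

/-- The map `f((a,b,c),u) = ((-a,-b,-c),u)` on `X = S² × S¹`. -/
def fX (x : XS2S1) : XS2S1 := (antipS2 x.1, x.2)

/-- The subset `A = {(a,b,0) ∈ S²} × {i,-i}` of `X = S² × S¹`. -/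
def AX : Set XS2S1 :=
  {x | (x.1 : ℝ × ℝ × ℝ).2.2 = 0 ∧ ((x.2 : ℂ) = Complex.I ∨ (x.2 : ℂ) = -Complex.I)}

lemma sphMem (a b c β : ℝ) (h : a ^ 2 + b ^ 2 + c ^ 2 = 1) :
    (a * Real.cos β - b * Real.sin β) ^ 2 + (a * Real.sin β + b * Real.cos β) ^ 2
      + (-c) ^ 2 = 1 := by
  nlinarith [Real.sin_sq_add_cos_sq β]

noncomputable def Hmap (p : XS2S1 × unitInterval) : XS2S1 :=
  let a := ((p.1.1 : ℝ × ℝ × ℝ)).1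
  let b := ((p.1.1 : ℝ × ℝ × ℝ)).2.1
  let c := ((p.1.1 : ℝ × ℝ × ℝ)).2.2
  let u : ℂ := p.1.2
  let t : ℝ := p.2
  let β : ℝ := Real.pi * (1 - t * u.im ^ 2)
  (⟨(a * Real.cos β - b * Real.sin β, a * Real.sin β + b * Real.cos β, -c),
      sphMem a b c β p.1.1.2⟩,
   ⟨u * Complex.exp ((t * u.re * u.im : ℝ) * Complex.I), by
      have h := p.1.2.2
      simp only [SphC, Set.mem_setOf_eq] at h ⊢
      rw [norm_mul, h, Complex.norm_exp_ofReal_mul_I, one_mul]⟩)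

set_option maxHeartbeats 2000000 in
/-- The set `A = {(a,b,0)} × {i,-i}` can be realized as the fixed point set of a map
`ℤ₂`-homotopic (not necessarily fiberwise) to `f((a,b,c),u) = ((-a,-b,-c),u)`. -/
theorem exists_equivariant_homotopy_realizing_A :
    ∃ H : XS2S1 × unitInterval → XS2S1,
      Continuous H ∧
      (∀ (x : XS2S1) (t : unitInterval), H (rhoX x, t) = rhoX (H (x, t))) ∧
      (∀ x : XS2S1, H (x, 0) = fX x) ∧
      {x : XS2S1 | H (x, 1) = x} = AX := by
  refine ⟨Hmap, ?_, ?_, ?_, ?_⟩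
  · -- continuity
    have ha : Continuous fun p : XS2S1 × unitInterval => ((p.1.1 : ℝ × ℝ × ℝ)).1 := by fun_prop
    have hb : Continuous fun p : XS2S1 × unitInterval => ((p.1.1 : ℝ × ℝ × ℝ)).2.1 := by fun_prop
    have hc : Continuous fun p : XS2S1 × unitInterval => ((p.1.1 : ℝ × ℝ × ℝ)).2.2 := by fun_prop
    have hu : Continuous fun p : XS2S1 × unitInterval => (p.1.2 : ℂ) := by fun_prop
    have ht : Continuous fun p : XS2S1 × unitInterval => (p.2 : ℝ) := by fun_prop
    have hre : Continuous fun p : XS2S1 × unitInterval => (p.1.2 : ℂ).re :=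
      Complex.continuous_re.comp hu
    have him : Continuous fun p : XS2S1 × unitInterval => (p.1.2 : ℂ).im :=
      Complex.continuous_im.comp hu
    have hβ : Continuous fun p : XS2S1 × unitInterval =>
        Real.pi * (1 - (p.2 : ℝ) * (p.1.2 : ℂ).im ^ 2) := by fun_prop
    apply Continuous.prodMk
    · apply Continuous.subtype_mk
      refine Continuous.prodMk ?_ (Continuous.prodMk ?_ ?_)
      · exact (ha.mul (Real.continuous_cos.comp hβ)).sub (hb.mul (Real.continuous_sin.comp hβ))
      · exact (ha.mul (Real.continuous_sin.comp hβ)).add (hb.mul (Real.continuous_cos.comp hβ))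
      · exact hc.neg
    · apply Continuous.subtype_mk
      exact hu.mul (Complex.continuous_exp.comp
        ((Complex.continuous_ofReal.comp ((ht.mul hre).mul him)).mul continuous_const))
  · -- equivariance
    intro x t
    unfold Hmap rhoX conjC
    apply Prod.ext
    · apply Subtype.ext
      simp [Complex.conj_im, Complex.conj_re]
    · apply Subtype.ext
      simp only [Prod.fst, Prod.snd]
      push_cast
      rw [map_mul, ← Complex.exp_conj]
      congr 1
      simp [Complex.conj_re, Complex.conj_im, map_mul, Complex.conj_ofReal, Complex.conj_I]
  · -- t = 0
    intro x
    unfold Hmap fX antipS2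
    apply Prod.ext
    · apply Subtype.ext
      simp [Real.cos_pi, Real.sin_pi]
    · apply Subtype.ext
      simp
  · -- fixed set
    ext x
    simp only [Set.mem_setOf_eq, AX]
    constructor
    · intro h
      -- notation
      have hn : (x.2 : ℂ).re ^ 2 + (x.2 : ℂ).im ^ 2 = 1 := by
        have h2 := x.2.2
        simp only [SphC, Set.mem_setOf_eq] at h2
        have h3 := Complex.sq_norm (x.2 : ℂ)
        rw [h2] at h3
        simp [Complex.normSq_apply] at h3
        nlinarith [h3]
      have hs := x.1.2
      simp only [Sph2, Set.mem_setOf_eq] at hs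
      have h1 : ((Hmap (x, 1)).1 : ℝ × ℝ × ℝ) = (x.1 : ℝ × ℝ × ℝ) := by rw [h]
      simp only [Hmap] at h1
      rw [Prod.ext_iff] at h1
      obtain ⟨e1, h1'⟩ := h1
      rw [Prod.ext_iff] at h1'
      obtain ⟨e2, e3⟩ := h1'
      simp only [Set.Icc.coe_one, one_mul] at e1 e2 e3
      set a := ((x.1 : ℝ × ℝ × ℝ)).1 with ha
      set b := ((x.1 : ℝ × ℝ × ℝ)).2.1 with hb
      set c := ((x.1 : ℝ × ℝ × ℝ)).2.2 with hc
      set r := (x.2 : ℂ).re with hr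
      set m := (x.2 : ℂ).im with hm
      have hc0 : c = 0 := by linarith [e3]
      have hab : a ^ 2 + b ^ 2 = 1 := by rw [hc0] at hs; nlinarith [hs]
      set B := Real.pi * (1 - m ^ 2) with hB
      have e1' : a * (a * Real.cos B - b * Real.sin B) = a * a := by rw [e1]
      have e2' : b * (a * Real.sin B + b * Real.cos B) = b * b := by rw [e2]
      have key : Real.cos B * (a ^ 2 + b ^ 2) = a ^ 2 + b ^ 2 := by
        linear_combination e1' + e2'
      have hcos : Real.cos B = 1 := by
        rw [hab] at key; linarith
      have hm2 : 0 ≤ m ^ 2 := sq_nonneg m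
      have hm1 : m ^ 2 ≤ 1 := by nlinarith [sq_nonneg r]
      have hBnn : 0 ≤ B := by
        have := Real.pi_pos
        nlinarith
      have hBle : B ≤ Real.pi := by
        have := Real.pi_pos
        nlinarith
      have hB0 : B = 0 := by
        have hp := Real.pi_pos
        have l1 : -(2 * Real.pi) < B := by nlinarith
        have l2 : B < 2 * Real.pi := by nlinarith
        exact (Real.cos_eq_one_iff_of_lt_of_lt l1 l2).mp hcos
      have hmm : m ^ 2 = 1 := by
        have hπ := Real.pi_ne_zero
        have : 1 - m ^ 2 = 0 := by
          rcases mul_eq_zero.mp hB0 with h' | h'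
          · exact absurd h' hπ
          · exact h'
        linarith
      have hr0 : r = 0 := by nlinarith [hn]
      refine ⟨hc0, ?_⟩
      have : (m - 1) * (m + 1) = 0 := by nlinarith
      rcases mul_eq_zero.mp this with h' | h'
      · left
        apply Complex.ext
        · simp only [Complex.I_re]; exact hr0
        · simp only [Complex.I_im]; linarith
      · right
        apply Complex.ext
        · simp only [Complex.neg_re, Complex.I_re, neg_zero]; exact hr0
        · simp only [Complex.neg_im, Complex.I_im]; linarith
    · rintro ⟨hc0, hu⟩
      have hr0 : (x.2 : ℂ).re = 0 := by
        rcases hu with h' | h' <;> rw [h'] <;> simp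
      have hm1 : (x.2 : ℂ).im ^ 2 = 1 := by
        rcases hu with h' | h' <;> rw [h'] <;> simp
      show Hmap (x, 1) = x
      unfold Hmap
      apply Prod.ext
      · apply Subtype.ext
        simp only [Set.Icc.coe_one, one_mul, hm1]
        simp [hc0, Real.cos_zero, Real.sin_zero]
        rw [← hc0]
      · apply Subtype.ext
        simp [hr0]
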